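/- Let p be a prime, L a field of characteristic p, and f ∈ m ⊂ L[x_1,…,x_n] homogeneous of degree d under an ℕ-grading with deg x_i = w_i, such that λ := (Σ w_i)/d ≤ 1. Suppose fpt(f) = λ, and let g be a polynomial all of whose monomials have degree > d. Then fpt(f+g) = fpt(f). (Upper bound direction: for every e ≥ 1 and every 0 ≤ k ≤ ν_f(p^e)+1, every monomial of f^{ν_f(p^e)+1−k} g^k has degree ≥ p^e·Σ w_i, hence lies in m^{[p^e]}, whence ν_{f+g}(p^e) ≤ ν_f(p^e).) -/

import Mathlib

open MvPolynomial

/-- The `e`-th truncation of the non-terminating base `p` expansion of `α ∈ (0,1]`: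
the unique multiple of `p^{-e}` with `⟨α⟩_e < α ≤ ⟨α⟩_e + p^{-e}`
(with the convention `⟨α⟩_e = 0` for `α ≤ 0`). -/
noncomputable def trunc (p e : ℕ) (α : ℝ) : ℝ :=
  if α ≤ 0 then 0 else (⌈α * (p : ℝ) ^ e⌉ - 1) / (p : ℝ) ^ e

/-- The `e`-th digit (`e ≥ 1`) of the non-terminating base `p` expansion of `α ∈ (0,1]`,
namely `p^e ⟨α⟩_e - p^e ⟨α⟩_{e-1}`. -/
noncomputable def digit (p e : ℕ) (α : ℝ) : ℤ :=
  (⌈α * (p : ℝ) ^ e⌉ - 1) - p * (⌈α * (p : ℝ) ^ (e - 1)⌉ - 1)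

/-- Least positive residue of `m` modulo `b`: the unique `r` with `1 ≤ r ≤ b`, `r ≡ m (mod b)`. -/
def lpr (m b : ℤ) : ℤ := if m % b = 0 then b else m % b

/-- The `e`-th Frobenius power `m^{[p^e]} = (x_1^{p^e}, …, x_n^{p^e})`. -/
noncomputable def frobPow (p n : ℕ) (K : Type*) [Field K] (e : ℕ) :
    Ideal (MvPolynomial (Fin n) K) :=
  Ideal.span (Set.range fun i => (X i : MvPolynomial (Fin n) K) ^ p ^ e)

/-- `ν_f(p^e) = max { N | f^N ∉ m^{[p^e]} }`. -/
noncomputable def nu (p : ℕ) {n : ℕ} {K : Type*} [Field K]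
    (f : MvPolynomial (Fin n) K) (e : ℕ) : ℕ :=
  sSup {N : ℕ | f ^ N ∉ frobPow p n K e}

/-- The F-pure threshold `fpt(f) = lim_e ν_f(p^e)/p^e`; since the sequence is
non-decreasing and bounded, the limit equals the supremum. -/
noncomputable def fpt (p : ℕ) {n : ℕ} {K : Type*} [Field K]
    (f : MvPolynomial (Fin n) K) : ℝ :=
  ⨆ e : ℕ, (nu p f e : ℝ) / (p : ℝ) ^ e

/-- The maximal ideal `m = (x_1, …, x_n)`. -/
noncomputable def mIdeal (n : ℕ) (K : Type*) [Field K] : Ideal (MvPolynomial (Fin n) K) :=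
  Ideal.span (Set.range (X : Fin n → MvPolynomial (Fin n) K))

section Aux

variable {p n : ℕ} {K : Type*} [Field K]

theorem mem_frobPow_iff {e : ℕ} {h : MvPolynomial (Fin n) K} :
    h ∈ frobPow p n K e ↔ ∀ u ∈ h.support, ∃ i, p ^ e ≤ u i := by
  have hset : (Set.range fun i => (X i : MvPolynomial (Fin n) K) ^ p ^ e)
      = (fun s => monomial s (1 : K)) ''
        (Set.range fun i : Fin n => Finsupp.single i (p ^ e)) := by
    rw [← Set.range_comp]
    apply congrArg
    funext i
    simp [Function.comp, X_pow_eq_monomial]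
  rw [frobPow, hset, mem_ideal_span_monomial_image]
  refine forall₂_congr fun u hu => ?_
  constructor
  · rintro ⟨s, ⟨i, rfl⟩, hs⟩
    exact ⟨i, (Finsupp.single_le_iff).mp hs⟩
  · rintro ⟨i, hi⟩
    exact ⟨Finsupp.single i (p ^ e), ⟨i, rfl⟩, (Finsupp.single_le_iff).mpr hi⟩

theorem mem_mIdeal_iff {h : MvPolynomial (Fin n) K} :
    h ∈ mIdeal n K ↔ ∀ u ∈ h.support, u ≠ 0 := by
  rw [mIdeal, ← Set.image_univ, mem_ideal_span_X_image]
  refine forall₂_congr fun u hu => ?_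
  constructor
  · rintro ⟨i, -, hi⟩ h0
    exact hi (by simp [h0])
  · intro hne
    obtain ⟨i, hi⟩ := Finsupp.ne_iff.mp hne
    exact ⟨i, Set.mem_univ i, by simpa using hi⟩

/-- weighted degree as a plain sum -/
def Wd (w : Fin n → ℕ) (u : Fin n →₀ ℕ) : ℕ := ∑ i, u i * w i

theorem Wd_add (w : Fin n → ℕ) (u v : Fin n →₀ ℕ) : Wd w (u + v) = Wd w u + Wd w v := by
  simp [Wd, add_mul, Finset.sum_add_distrib]

theorem weight_eq_Wd (w : Fin n → ℕ) (u : Fin n →₀ ℕ) :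
    (Finsupp.weight w) u = Wd w u := by
  rw [Finsupp.weight_apply, Finsupp.sum_fintype]
  · simp [Wd, smul_eq_mul]
  · intro i; simp

theorem LB_mul {w : Fin n → ℕ} {a b : ℕ} {P Q : MvPolynomial (Fin n) K}
    (hP : ∀ u ∈ P.support, a ≤ Wd w u) (hQ : ∀ u ∈ Q.support, b ≤ Wd w u) :
    ∀ u ∈ (P * Q).support, a + b ≤ Wd w u := by
  intro u hu
  have := MvPolynomial.support_mul P Q hu
  rw [Finset.mem_add] at this
  obtain ⟨v, hv, t, ht, rfl⟩ := this
  rw [Wd_add]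
  exact add_le_add (hP v hv) (hQ t ht)

theorem LB_pow {w : Fin n → ℕ} {a : ℕ} {P : MvPolynomial (Fin n) K}
    (hP : ∀ u ∈ P.support, a ≤ Wd w u) (k : ℕ) :
    ∀ u ∈ (P ^ k).support, k * a ≤ Wd w u := by
  induction k with
  | zero =>
      intro u hu
      simp
  | succ k ih =>
      intro u hu
      rw [pow_succ] at hu
      rw [Nat.succ_mul]
      exact LB_mul ih hP u hu

theorem LB_sum {ι : Type*} {w : Fin n → ℕ} {m : ℕ} {s : Finset ι}
    {F : ι → MvPolynomial (Fin n) K}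
    (h : ∀ i ∈ s, ∀ u ∈ (F i).support, m ≤ Wd w u) :
    ∀ u ∈ (∑ i ∈ s, F i).support, m ≤ Wd w u := by
  classical
  induction s using Finset.induction with
  | empty => intro u hu; simp at hu
  | insert i s hnot ih =>
      intro u hu
      rw [Finset.sum_insert hnot] at hu
      have := MvPolynomial.support_add hu
      rw [Finset.mem_union] at this
      rcases this with h1 | h2
      · exact h i (Finset.mem_insert_self i s) u h1
      · exact ih (fun j hj => h j (Finset.mem_insert_of_mem hj)) u h2

theorem mem_frobPow_of_high_deg {w : Fin n → ℕ} {e : ℕ} {h : MvPolynomial (Fin n) K}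
    (hh : ∀ u ∈ h.support, (p ^ e - 1) * (∑ i, w i) < Wd w u) :
    h ∈ frobPow p n K e := by
  rw [mem_frobPow_iff]
  intro u hu
  by_contra hcon
  push_neg at hcon
  have hle : Wd w u ≤ (p ^ e - 1) * ∑ i, w i := by
    rw [Finset.mul_sum]
    exact Finset.sum_le_sum fun i _ => Nat.mul_le_mul_right _ (by have := hcon i; omega)
  exact absurd (hh u hu) (not_lt.mpr hle)

theorem one_not_mem_frobPow (hp : p.Prime) {e : ℕ} :
    (1 : MvPolynomial (Fin n) K) ∉ frobPow p n K e := by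
  rw [mem_frobPow_iff]
  intro hmem
  have h0 : (0 : Fin n →₀ ℕ) ∈ (1 : MvPolynomial (Fin n) K).support := by
    rw [mem_support_iff]; simp
  obtain ⟨i, hi⟩ := hmem _ h0
  have hpos : 0 < p ^ e := Nat.pow_pos hp.pos
  have hzero : (0 : Fin n →₀ ℕ) i = 0 := rfl
  rw [hzero] at hi
  omega

theorem pow_mem_of_le {e M N : ℕ} {h : MvPolynomial (Fin n) K} (hMN : M ≤ N)
    (hM : h ^ M ∈ frobPow p n K e) : h ^ N ∈ frobPow p n K e := by
  have : h ^ N = h ^ M * h ^ (N - M) := by rw [← pow_add]; congr 1; omega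
  rw [this]
  exact Ideal.mul_mem_right _ _ hM

theorem S_bddAbove {e : ℕ} {h : MvPolynomial (Fin n) K} (hh : h ∈ mIdeal n K) :
    BddAbove {N : ℕ | h ^ N ∉ frobPow p n K e} := by
  refine ⟨(p ^ e - 1) * n, ?_⟩
  intro N hN
  by_contra hcon
  push_neg at hcon
  apply hN
  apply mem_frobPow_of_high_deg (w := fun _ => 1)
  intro u hu
  have hLB : ∀ u ∈ h.support, 1 ≤ Wd (fun _ => 1) u := by
    intro v hv
    obtain ⟨i, hi⟩ := Finsupp.ne_iff.mp (mem_mIdeal_iff.mp hh v hv)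
    simp only [Finsupp.coe_zero, Pi.zero_apply] at hi
    have h1 : v i ≤ ∑ j, v j :=
      Finset.single_le_sum (f := fun j => v j) (fun j _ => Nat.zero_le _) (Finset.mem_univ i)
    have h2 : Wd (fun _ => 1) v = ∑ j, v j := by simp [Wd]
    rw [h2]
    omega
  have := LB_pow hLB N u hu
  have hn : (∑ _i : Fin n, (1 : ℕ)) = n := by simp
  rw [hn]
  omega

theorem S_zero_mem (hp : p.Prime) {e : ℕ} (h : MvPolynomial (Fin n) K) :
    0 ∈ {N : ℕ | h ^ N ∉ frobPow p n K e} := by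
  simp only [Set.mem_setOf_eq, pow_zero]
  exact one_not_mem_frobPow hp

theorem nu_not_mem (hp : p.Prime) {e : ℕ} {h : MvPolynomial (Fin n) K} (hh : h ∈ mIdeal n K) :
    h ^ nu p h e ∉ frobPow p n K e :=
  Nat.sSup_mem ⟨0, S_zero_mem hp h⟩ (S_bddAbove hh)

theorem nu_succ_mem (hp : p.Prime) {e : ℕ} {h : MvPolynomial (Fin n) K} (hh : h ∈ mIdeal n K) :
    h ^ (nu p h e + 1) ∈ frobPow p n K e := by
  by_contra hc
  have : nu p h e + 1 ≤ nu p h e := le_csSup (S_bddAbove hh) hc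
  omega

theorem le_nu {e N : ℕ} {h : MvPolynomial (Fin n) K} (hh : h ∈ mIdeal n K)
    (hN : h ^ N ∉ frobPow p n K e) : N ≤ nu p h e :=
  le_csSup (S_bddAbove hh) hN

theorem coeff_pow_p (hp : p.Prime) [CharP K p] (h : MvPolynomial (Fin n) K) (u : Fin n →₀ ℕ) :
    coeff (p • u) (h ^ p) = (coeff u h) ^ p := by
  haveI := Fact.mk hp
  induction h using MvPolynomial.induction_on' with
  | monomial v c =>
      rw [monomial_pow]
      rcases eq_or_ne v u with rfl | hne
      · simp [coeff_monomial]
      · rw [coeff_monomial, if_neg, coeff_monomial, if_neg hne, zero_pow hp.ne_zero]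
        intro hvu
        apply hne
        ext i
        have := DFunLike.congr_fun hvu i
        simp only [Finsupp.smul_apply, smul_eq_mul] at this
        exact Nat.eq_of_mul_eq_mul_left hp.pos this
  | add a b ha hb =>
      rw [add_pow_char, coeff_add, coeff_add, ha, hb, add_pow_char]

theorem not_mem_frobPow_pow (hp : p.Prime) [CharP K p] {e : ℕ} {h : MvPolynomial (Fin n) K}
    (hh : h ∉ frobPow p n K e) : h ^ p ∉ frobPow p n K (e + 1) := by
  rw [mem_frobPow_iff] at hh ⊢
  push_neg at hh ⊢
  obtain ⟨u, hu, hlt⟩ := hh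
  refine ⟨p • u, ?_, ?_⟩
  · rw [mem_support_iff, coeff_pow_p hp]
    exact pow_ne_zero _ (mem_support_iff.mp hu)
  · intro i
    have h1 : u i < p ^ e := hlt i
    have h2 : p * u i < p * p ^ e := by
      exact mul_lt_mul_of_pos_left h1 hp.pos
    simp only [Finsupp.smul_apply, smul_eq_mul]
    calc p * u i < p * p ^ e := h2
      _ = p ^ (e + 1) := by ring

theorem not_mem_frobPow_pow_iter (hp : p.Prime) [CharP K p] (c : ℕ) {e : ℕ}
    {h : MvPolynomial (Fin n) K} (hh : h ∉ frobPow p n K e) :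
    h ^ p ^ c ∉ frobPow p n K (e + c) := by
  induction c with
  | zero => simpa
  | succ c ih =>
      rw [pow_succ, pow_mul]
      exact not_mem_frobPow_pow hp ih

theorem mem_frobPow_pow (hp : p.Prime) [CharP K p] (c : ℕ) {e : ℕ}
    {h : MvPolynomial (Fin n) K} (hh : h ∈ frobPow p n K e) :
    h ^ p ^ c ∈ frobPow p n K (e + c) := by
  haveI := Fact.mk hp
  have hq : p ^ c ≠ 0 := (Nat.pow_pos hp.pos).ne'
  induction hh using Submodule.span_induction with
  | mem x hx =>
      obtain ⟨i, rfl⟩ := hx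
      rw [← pow_mul, ← pow_add]
      exact Ideal.subset_span ⟨i, rfl⟩
  | zero => rw [zero_pow hq]; exact Ideal.zero_mem _
  | add a b ha hb hha hhb =>
      rw [add_pow_char_pow]
      exact Ideal.add_mem _ hha hhb
  | smul r a ha hha =>
      rw [smul_eq_mul, mul_pow]
      exact Ideal.mul_mem_left _ _ hha

theorem IWH_pow {w : Fin n → ℕ} {φ : MvPolynomial (Fin n) K} {m : ℕ}
    (hφ : φ.IsWeightedHomogeneous w m) (k : ℕ) :
    (φ ^ k).IsWeightedHomogeneous w (k * m) := by
  induction k with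
  | zero => simpa using isWeightedHomogeneous_one K w
  | succ k ih =>
      rw [pow_succ, Nat.succ_mul]
      exact ih.mul hφ

end Aux

/-- if `fpt(f) = λ = (Σ w_i)/d ≤ 1` and every monomial of `g` has degree
`> d`, then `fpt(f+g) = fpt(f)`. -/
theorem stmt_18 (p : ℕ) (hp : p.Prime) (n : ℕ) (K : Type*) [Field K] [CharP K p]
    (w : Fin n → ℕ) (hw : ∀ i, 0 < w i) (d : ℕ)
    (f : MvPolynomial (Fin n) K) (hf0 : f ≠ 0)
    (hfh : f.IsWeightedHomogeneous w d) (hfm : f ∈ mIdeal n K)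
    (lam : ℝ) (hlam : lam = (∑ i, (w i : ℝ)) / d) (hlam1 : lam ≤ 1)
    (hfpt : fpt p f = lam)
    (g : MvPolynomial (Fin n) K)
    (hg : ∀ u ∈ g.support, d < ∑ i, u i * w i) :
    fpt p (f + g) = fpt p f := by
  haveI := Fact.mk hp
  classical
  -- basic positivity facts
  obtain ⟨u0, hu0⟩ := MvPolynomial.ne_zero_iff.mp hf0
  have hu0s : u0 ∈ f.support := mem_support_iff.mpr hu0
  have hu0ne : u0 ≠ 0 := mem_mIdeal_iff.mp hfm u0 hu0s
  have hdeg0 : Wd w u0 = d := by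
    have := hfh hu0
    rwa [weight_eq_Wd] at this
  obtain ⟨i0, hi0⟩ := Finsupp.ne_iff.mp hu0ne
  simp only [Finsupp.coe_zero, Pi.zero_apply] at hi0
  have hd : 0 < d := by
    rw [← hdeg0]
    have h1 : u0 i0 * w i0 ≤ Wd w u0 :=
      Finset.single_le_sum (f := fun j => u0 j * w j) (fun j _ => Nat.zero_le _)
        (Finset.mem_univ i0)
    have h2 := hw i0
    have h3 : 0 < u0 i0 * w i0 := Nat.mul_pos (by omega) h2
    omega
  have hWpos : 0 < ∑ i, w i := by
    have h1 : w i0 ≤ ∑ i, w i :=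
      Finset.single_le_sum (f := fun j => w j) (fun j _ => Nat.zero_le _) (Finset.mem_univ i0)
    have := hw i0
    omega
  -- g and f + g are in the maximal ideal
  have hgm : g ∈ mIdeal n K := by
    rw [mem_mIdeal_iff]
    intro u hu h0
    have := hg u hu
    rw [h0] at this
    simp at this
  have hfgm : f + g ∈ mIdeal n K := Ideal.add_mem _ hfm hgm
  have hpR : (0 : ℝ) < (p : ℝ) := by exact_mod_cast hp.pos
  -- key inequality : p^e * lam ≤ nu_e + 1
  have hkey : ∀ e : ℕ, lam * (p : ℝ) ^ e ≤ (nu p f e : ℝ) + 1 := by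
    intro e
    have hsup : fpt p f ≤ ((nu p f e : ℝ) + 1) / (p : ℝ) ^ e := by
      apply ciSup_le
      intro E
      rw [div_le_div_iff₀ (pow_pos hpR E) (pow_pos hpR e)]
      rcases le_total E e with hEe | heE
      · have hnat : p ^ (e - E) * nu p f E ≤ nu p f e := by
          apply le_nu hfm
          have h1 := not_mem_frobPow_pow_iter hp (e - E) (nu_not_mem hp hfm (e := E) (h := f))
          rw [← pow_mul] at h1
          have h2 : E + (e - E) = e := by omega
          rw [h2] at h1
          rwa [mul_comm] at h1
        have hnat2 : nu p f E * p ^ e ≤ (nu p f e + 1) * p ^ E := by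
          have h2 : p ^ e = p ^ E * p ^ (e - E) := by rw [← pow_add]; congr 1; omega
          calc nu p f E * p ^ e = p ^ (e - E) * nu p f E * p ^ E := by rw [h2]; ring
            _ ≤ (nu p f e) * p ^ E := Nat.mul_le_mul_right _ hnat
            _ ≤ (nu p f e + 1) * p ^ E := Nat.mul_le_mul_right _ (by omega)
        exact_mod_cast hnat2
      · have hnat : nu p f E + 1 ≤ (nu p f e + 1) * p ^ (E - e) := by
          by_contra hc
          push_neg at hc
          apply nu_not_mem hp hfm (e := E) (h := f)
          have h1 := mem_frobPow_pow hp (E - e) (nu_succ_mem hp hfm (e := e) (h := f))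
          rw [← pow_mul] at h1
          have h2 : e + (E - e) = E := by omega
          rw [h2] at h1
          exact pow_mem_of_le (by omega) h1
        have hnat2 : nu p f E * p ^ e ≤ (nu p f e + 1) * p ^ E := by
          have h2 : p ^ E = p ^ (E - e) * p ^ e := by rw [← pow_add]; congr 1; omega
          calc nu p f E * p ^ e ≤ (nu p f e + 1) * p ^ (E - e) * p ^ e :=
                Nat.mul_le_mul (le_trans (Nat.le_succ _) hnat) (le_refl _)
            _ = (nu p f e + 1) * p ^ E := by rw [h2]; ring
        exact_mod_cast hnat2
    rw [hfpt] at hsup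
    exact (le_div_iff₀ (pow_pos hpR e)).mp hsup
  -- key natural-number inequality : p^e * W ≤ (nu_e + 1) * d
  have hlamd : lam * (d : ℝ) = ((∑ i, w i : ℕ) : ℝ) := by
    rw [hlam]
    push_cast
    rw [div_mul_cancel₀]
    exact_mod_cast hd.ne'
  have hKeyN : ∀ e : ℕ, p ^ e * (∑ i, w i) ≤ (nu p f e + 1) * d := by
    intro e
    have hreal : ((p ^ e * (∑ i, w i) : ℕ) : ℝ) ≤ (((nu p f e + 1) * d : ℕ) : ℝ) := by
      push_cast
      calc (p : ℝ) ^ e * (∑ i, (w i : ℝ))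
          = lam * (p : ℝ) ^ e * d := by
            rw [mul_comm lam _, mul_assoc, hlamd]; push_cast; ring
        _ ≤ ((nu p f e : ℝ) + 1) * d := by
            apply mul_le_mul_of_nonneg_right (hkey e)
            positivity
    exact_mod_cast hreal
  -- lower bounds on supports
  have hLBf : ∀ k : ℕ, ∀ v ∈ (f ^ k).support, k * d ≤ Wd w v := by
    intro k v hv
    have := (IWH_pow hfh k) (mem_support_iff.mp hv)
    rw [weight_eq_Wd] at this
    omega
  have hLBg : ∀ m : ℕ, ∀ v ∈ (g ^ m).support, m * (d + 1) ≤ Wd w v := by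
    intro m
    apply LB_pow
    intro v hv
    exact hg v hv
  -- the per-e equality of nu
  have hnueq : ∀ e : ℕ, nu p (f + g) e = nu p f e := by
    intro e
    -- (f+g)^(nu_e + 1) ∈ frobPow
    have hfgN : (f + g) ^ (nu p f e + 1) ∈ frobPow p n K e := by
      rw [add_pow]
      apply Ideal.sum_mem
      intro k hk
      rw [Finset.mem_range, Nat.lt_succ_iff] at hk
      rcases eq_or_lt_of_le hk with heq | hkN
      · rw [heq]
        simp only [Nat.sub_self, pow_zero, mul_one]
        exact Ideal.mul_mem_right _ _ (nu_succ_mem hp hfm)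
      · apply Ideal.mul_mem_right
        apply mem_frobPow_of_high_deg (w := w)
        intro u hu
        have h3 := LB_mul (hLBf k) (hLBg (nu p f e + 1 - k)) u hu
        have haN : k + (nu p f e + 1 - k) = nu p f e + 1 := by omega
        have hexp : k * d + (nu p f e + 1 - k) * (d + 1)
            = (k + (nu p f e + 1 - k)) * d + (nu p f e + 1 - k) := by ring
        rw [haN] at hexp
        have h4 := hKeyN e
        have h5 : (p ^ e - 1) * (∑ i, w i) ≤ p ^ e * (∑ i, w i) :=
          Nat.mul_le_mul_right _ (by omega)
        have h6 : 1 ≤ nu p f e + 1 - k := by omega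
        omega
    have hle : nu p (f + g) e ≤ nu p f e := by
      apply csSup_le ⟨0, S_zero_mem hp _⟩
      intro M hM
      by_contra hc
      push_neg at hc
      exact hM (pow_mem_of_le (by omega) hfgN)
    have hge : nu p f e ≤ nu p (f + g) e := by
      apply le_nu hfgm
      intro hcon
      apply nu_not_mem hp hfm (e := e) (h := f)
      rw [mem_frobPow_iff] at hcon ⊢
      intro u hu
      have hWdu : Wd w u = nu p f e * d := by
        have := (IWH_pow hfh (nu p f e)) (mem_support_iff.mp hu)
        rw [weight_eq_Wd] at this
        omega
      have hexp : (f + g) ^ (nu p f e)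
          = (∑ k ∈ Finset.range (nu p f e),
              f ^ k * g ^ (nu p f e - k) * ((nu p f e).choose k : MvPolynomial (Fin n) K))
            + f ^ (nu p f e) := by
        rw [add_pow, Finset.sum_range_succ]
        simp
      have hR : ∀ v ∈ (∑ k ∈ Finset.range (nu p f e),
          f ^ k * g ^ (nu p f e - k)
            * ((nu p f e).choose k : MvPolynomial (Fin n) K)).support,
          nu p f e * d + 1 ≤ Wd w v := by
        apply LB_sum
        intro k hk
        rw [Finset.mem_range] at hk
        intro v hv
        have hLBc : ∀ t ∈ ((((nu p f e).choose k : ℕ) : MvPolynomial (Fin n) K)).support,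
            0 ≤ Wd w t := fun t _ => Nat.zero_le _
        have h3 := LB_mul (LB_mul (hLBf k) (hLBg (nu p f e - k))) hLBc v hv
        have haN : k + (nu p f e - k) = nu p f e := by omega
        have hexp2 : k * d + (nu p f e - k) * (d + 1)
            = (k + (nu p f e - k)) * d + (nu p f e - k) := by ring
        rw [haN] at hexp2
        have h6 : 1 ≤ nu p f e - k := by omega
        omega
      have hune : u ∉ (∑ k ∈ Finset.range (nu p f e),
          f ^ k * g ^ (nu p f e - k)
            * ((nu p f e).choose k : MvPolynomial (Fin n) K)).support := by
        intro hmem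
        have := hR u hmem
        omega
      have hcoeff : coeff u ((f + g) ^ (nu p f e)) = coeff u (f ^ (nu p f e)) := by
        rw [hexp, coeff_add, notMem_support_iff.mp hune, zero_add]
      have humem : u ∈ ((f + g) ^ (nu p f e)).support := by
        rw [mem_support_iff, hcoeff]
        exact mem_support_iff.mp hu
      exact hcon u humem
    omega
  unfold fpt
  exact iSup_congr fun e => by rw [hnueq e]
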